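/- Let 1 -> H -> G -> K -> 1 be a short exact sequence of finite groups. Then d(G) <= (d(H) - 1) f(K) + d(K). Moreover, if d(G) = (d(H) - 1) f(K) + d(K), then f(G) <= f(H) f(K). -/

import Mathlib

open List Subgroup

/-- The set of all products of the terms of `S` in all orders. -/
def PiSet {G : Type*} [Group G] (S : List G) : Set G :=
  {g | ∃ l : List G, l.Perm S ∧ l.prod = g}

/-- `S` is a product-one sequence if `1 ∈ Π(S)`. -/
def IsProdOne {G : Type*} [Group G] (S : List G) : Prop :=
  (1 : G) ∈ PiSet S

/-- The Davenport constant `d(G)`: the smallest `m` such that every sequence of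
length `m` over `G` contains a nonempty product-one subsequence. -/
noncomputable def dC (G : Type*) [Group G] : ℕ :=
  sInf {m | 0 < m ∧ ∀ S : List G, S.length = m →
    ∃ T : List G, T ≠ [] ∧ T.Sublist S ∧ IsProdOne T}

/-- `e(G)`: the smallest `m` such that every nonempty product-one sequence over `G`
contains a nonempty product-one subsequence of length at most `m`. -/
noncomputable def eC (G : Type*) [Group G] : ℕ :=
  sInf {m | 0 < m ∧ ∀ S : List G, S ≠ [] → IsProdOne S →
    ∃ T : List G, T ≠ [] ∧ T.Sublist S ∧ T.length ≤ m ∧ IsProdOne T}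

/-- `f(G)`: the smallest `m` such that every sequence of length `d(G)` over `G`
contains a nonempty product-one subsequence of length at most `m`. -/
noncomputable def fC (G : Type*) [Group G] : ℕ :=
  sInf {m | 0 < m ∧ ∀ S : List G, S.length = dC G →
    ∃ T : List G, T ≠ [] ∧ T.Sublist S ∧ T.length ≤ m ∧ IsProdOne T}

/-- The `k`-th Davenport constant `d_k(G)`: the smallest `m` such that every sequence of
length `m` over `G` contains `k` pairwise disjoint nonempty product-one subsequences. -/
noncomputable def dkC (G : Type*) [Group G] (k : ℕ) : ℕ :=
  sInf {m | 0 < m ∧ ∀ S : List G, S.length = m →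
    ∃ Ts : List (List G), Ts.length = k ∧ (∀ T ∈ Ts, T ≠ [] ∧ IsProdOne T) ∧
      (Ts.flatten : Multiset G) ≤ (S : Multiset G)}

/-! ### Auxiliary lemmas -/

section Aux

variable {G : Type*} [Group G]

lemma isProdOne_of_prod_eq_one {S : List G} (h : S.prod = 1) : IsProdOne S :=
  ⟨S, List.Perm.refl S, h⟩

lemma IsProdOne.perm {S S' : List G} (h : IsProdOne S) (hp : S.Perm S') : IsProdOne S' := by
  obtain ⟨l, hl, hl1⟩ := h
  exact ⟨l, hl.trans hp, hl1⟩

/-- The defining set of `dC` is nonempty: `Nat.card G` belongs to it. -/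
lemma dC_set_mem (G : Type*) [Group G] [Finite G] :
    Nat.card G ∈ {m | 0 < m ∧ ∀ S : List G, S.length = m →
      ∃ T : List G, T ≠ [] ∧ T.Sublist S ∧ IsProdOne T} := by
  cases nonempty_fintype G
  refine ⟨Nat.card_pos, fun S hS => ?_⟩
  set n := Nat.card G with hn
  have hcard : Fintype.card G = n := by rw [hn, Nat.card_eq_fintype_card]
  -- pigeonhole on prefix products
  have key : ∀ i j : Fin (n + 1), i < j →
      (S.take i).prod = (S.take j).prod →
      ∃ T : List G, T ≠ [] ∧ T.Sublist S ∧ IsProdOne T := by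
    intro i j hij heq
    refine ⟨(S.drop i).take (j - i), ?_, (List.take_sublist _ _).trans (List.drop_sublist _ _), ?_⟩
    · have hjlt : (j : ℕ) < n + 1 := j.isLt
      have hjS : (j : ℕ) ≤ S.length := by omega
      have hlen : ((S.drop i).take (j - i)).length = (j : ℕ) - i := by
        rw [List.length_take, List.length_drop, hS]
        omega
      intro hnil
      rw [hnil] at hlen
      simp at hlen
      omega
    · apply isProdOne_of_prod_eq_one
      have h1 : S.take j = S.take i ++ (S.drop i).take ((j : ℕ) - i) := by
        rw [← List.take_add]
        congr 1
        omega
      have h2 := heq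
      rw [h1, List.prod_append] at h2
      have h3 : (S.take i).prod * ((S.drop i).take ((j : ℕ) - i)).prod
          = (S.take i).prod * 1 := by rw [mul_one]; exact h2.symm
      exact mul_left_cancel h3
  have hlt : Fintype.card G < Fintype.card (Fin (n + 1)) := by
    rw [hcard, Fintype.card_fin]; omega
  obtain ⟨i, j, hne, heq⟩ :=
    Fintype.exists_ne_map_eq_of_card_lt (fun i : Fin (n + 1) => (S.take i).prod) hlt
  rcases lt_or_gt_of_ne hne with h | h
  · exact key i j h heq
  · exact key j i h heq.symm

lemma dC_spec (G : Type*) [Group G] [Finite G] :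
    0 < dC G ∧ ∀ S : List G, S.length = dC G →
      ∃ T : List G, T ≠ [] ∧ T.Sublist S ∧ IsProdOne T :=
  Nat.sInf_mem ⟨Nat.card G, dC_set_mem G⟩

lemma dC_pos (G : Type*) [Group G] [Finite G] : 0 < dC G := (dC_spec G).1

/-- `dC G` itself belongs to the defining set of `fC`. -/
lemma fC_set_mem (G : Type*) [Group G] [Finite G] :
    dC G ∈ {m | 0 < m ∧ ∀ S : List G, S.length = dC G →
      ∃ T : List G, T ≠ [] ∧ T.Sublist S ∧ T.length ≤ m ∧ IsProdOne T} := by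
  refine ⟨dC_pos G, fun S hS => ?_⟩
  obtain ⟨T, hT1, hT2, hT3⟩ := (dC_spec G).2 S hS
  exact ⟨T, hT1, hT2, hS ▸ hT2.length_le, hT3⟩

lemma fC_spec (G : Type*) [Group G] [Finite G] :
    0 < fC G ∧ ∀ S : List G, S.length = dC G →
      ∃ T : List G, T ≠ [] ∧ T.Sublist S ∧ T.length ≤ fC G ∧ IsProdOne T :=
  Nat.sInf_mem ⟨dC G, fC_set_mem G⟩

lemma fC_pos (G : Type*) [Group G] [Finite G] : 0 < fC G := (fC_spec G).1

/-- Any sequence of length at least `dC G` contains a nonempty product-one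
subsequence of length at most `fC G`. -/
lemma exists_short_of_length_ge (G : Type*) [Group G] [Finite G] {S : List G}
    (h : dC G ≤ S.length) :
    ∃ T : List G, T ≠ [] ∧ T.Sublist S ∧ T.length ≤ fC G ∧ IsProdOne T := by
  have hlen : (S.take (dC G)).length = dC G := by
    rw [List.length_take]; omega
  obtain ⟨T, hT1, hT2, hT3, hT4⟩ := (fC_spec G).2 (S.take (dC G)) hlen
  exact ⟨T, hT1, hT2.trans (S.take_sublist _), hT3, hT4⟩

/-- If `l₁` is a permutation of `l₂.map f` then it is the image of a permutation of `l₂`. -/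
lemma exists_perm_map {α β : Type*} (f : α → β) :
    ∀ (l₁ : List β) (l₂ : List α), l₁.Perm (l₂.map f) →
      ∃ l₃ : List α, l₃.Perm l₂ ∧ l₃.map f = l₁ := by
  classical
  intro l₁
  induction l₁ with
  | nil =>
    intro l₂ h
    have h2 : l₂.map f = [] := (h.nil_eq).symm
    rw [List.map_eq_nil_iff] at h2
    subst h2
    exact ⟨[], List.Perm.refl _, rfl⟩
  | cons a t ih =>
    intro l₂ h
    have ha : a ∈ l₂.map f := h.subset List.mem_cons_self
    obtain ⟨b, hb, rfl⟩ := List.mem_map.mp ha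
    have hperm : l₂.Perm (b :: l₂.erase b) := List.perm_cons_erase hb
    have h2 : (f b :: t).Perm (f b :: (l₂.erase b).map f) := by
      refine h.trans ?_
      simpa using hperm.map f
    have h3 : t.Perm ((l₂.erase b).map f) := h2.cons_inv
    obtain ⟨l₃, hl₃, hmap⟩ := ih (l₂.erase b) h3
    exact ⟨b :: l₃, (hl₃.cons b).trans hperm.symm, by simp [hmap]⟩

lemma Sublist.flatten' {α : Type*} : ∀ {l₁ l₂ : List (List α)}, l₁.Sublist l₂ →
    l₁.flatten.Sublist l₂.flatten := by
  intro l₁ l₂ h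
  induction h with
  | slnil => exact List.Sublist.refl _
  | cons a _ ih =>
    refine ih.trans ?_
    simpa using (List.sublist_append_right a.flatten _).trans
      (List.Sublist.refl _)
  | cons_cons a _ ih => simpa using List.Sublist.append (List.Sublist.refl a) ih

lemma sum_le_length_mul {c : ℕ} : ∀ {l : List ℕ}, (∀ x ∈ l, x ≤ c) → l.sum ≤ l.length * c := by
  intro l
  induction l with
  | nil => simp
  | cons x t ih =>
    intro h
    simp only [List.sum_cons, List.length_cons]
    have h1 : x ≤ c := h x List.mem_cons_self
    have h2 := ih fun y hy => h y (List.mem_cons_of_mem x hy)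
    calc x + t.sum ≤ c + t.length * c := Nat.add_le_add h1 h2
    _ = (t.length + 1) * c := by ring

end Aux

section Extraction

variable {G K : Type*} [Group G] [Group K] [Finite K]

/-- Repeated extraction of disjoint subsequences whose images in `K` are product-one. -/
lemma extract (φ : G →* K) :
    ∀ (k : ℕ) (S : List G), dC K + k * fC K ≤ S.length →
    ∃ Ts : List (List G), Ts.length = k + 1 ∧
      (∀ T ∈ Ts, T ≠ [] ∧ T.length ≤ fC K ∧ IsProdOne (T.map φ)) ∧
      (Ts.flatten : Multiset G) ≤ (S : Multiset G) := by
  classical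
  intro k
  induction k with
  | zero =>
    intro S hS
    have hS' : dC K ≤ (S.map φ).length := by rw [List.length_map]; omega
    obtain ⟨U, hU1, hU2, hU3, hU4⟩ := exists_short_of_length_ge K hS'
    obtain ⟨T, hT, rfl⟩ := List.sublist_map_iff.mp hU2
    refine ⟨[T], rfl, ?_, ?_⟩
    · intro T' hT'
      simp only [List.mem_singleton] at hT'
      subst hT'
      refine ⟨fun hnil => hU1 (by simp [hnil]), ?_, hU4⟩
      rw [List.length_map] at hU3; exact hU3
    · simpa using Multiset.coe_le.mpr (hT.subperm)
  | succ k ih =>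
    intro S hS
    have hS0 : dC K ≤ (S.map φ).length := by rw [List.length_map]; omega
    obtain ⟨U, hU1, hU2, hU3, hU4⟩ := exists_short_of_length_ge K hS0
    obtain ⟨T, hT, rfl⟩ := List.sublist_map_iff.mp hU2
    have hTlen : T.length ≤ fC K := by rw [List.length_map] at hU3; exact hU3
    have hTS : (T : Multiset G) ≤ (S : Multiset G) := Multiset.coe_le.mpr hT.subperm
    set M : Multiset G := (S : Multiset G) - (T : Multiset G) with hM
    have hcard : Multiset.card M = S.length - T.length := by
      rw [hM, Multiset.card_sub hTS]; simp
    have hlen' : dC K + k * fC K ≤ M.toList.length := by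
      rw [Multiset.length_toList, hcard]
      rw [Nat.succ_mul] at hS
      have h5 := hT.length_le
      omega
    obtain ⟨Ts, hTs1, hTs2, hTs3⟩ := ih M.toList hlen'
    refine ⟨T :: Ts, by simp [hTs1], ?_, ?_⟩
    · intro T' hT'
      rcases List.mem_cons.mp hT' with rfl | hmem
      · exact ⟨fun hnil => hU1 (by simp [hnil]), hTlen, hU4⟩
      · exact hTs2 T' hmem
    · have h1 : ((T :: Ts).flatten : Multiset G) = (T : Multiset G) + (Ts.flatten : Multiset G) := by
        simp [List.flatten_cons]
      rw [h1]
      have h2 : (Ts.flatten : Multiset G) ≤ M := by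
        rw [← Multiset.coe_toList M]; exact hTs3
      calc (T : Multiset G) + (Ts.flatten : Multiset G) ≤ (T : Multiset G) + M :=
            add_le_add le_rfl h2
        _ = (S : Multiset G) := by rw [hM, add_tsub_cancel_of_le hTS]

/-- For each list in `Ts` whose image is product-one, choose a permutation whose
product lies in the kernel. -/
lemma choose_perms (φ : G →* K) :
    ∀ Ts : List (List G), (∀ T ∈ Ts, T ≠ [] ∧ T.length ≤ fC K ∧ IsProdOne (T.map φ)) →
    ∃ P : List (List G), P.length = Ts.length ∧
      (∀ p ∈ P, p ≠ [] ∧ p.length ≤ fC K ∧ φ p.prod = 1) ∧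
      P.flatten.Perm Ts.flatten := by
  intro Ts
  induction Ts with
  | nil => exact fun _ => ⟨[], rfl, by simp, List.Perm.refl _⟩
  | cons T Ts ih =>
    intro h
    obtain ⟨hT1, hT2, hT3⟩ := h T List.mem_cons_self
    obtain ⟨P, hP1, hP2, hP3⟩ := ih fun T' hT' => h T' (List.mem_cons_of_mem T hT')
    obtain ⟨u, hu1, hu2⟩ := hT3
    obtain ⟨lT, hlT1, hlT2⟩ := exists_perm_map φ u T hu1
    refine ⟨lT :: P, by simp [hP1], ?_, ?_⟩
    · intro p hp
      rcases List.mem_cons.mp hp with rfl | hmem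
      · refine ⟨fun hnil => hT1 (List.Perm.nil_eq (hnil ▸ hlT1)).symm, ?_, ?_⟩
        · rw [hlT1.length_eq]; exact hT2
        · rw [map_list_prod, hlT2, hu2]
      · exact hP2 p hmem
    · simpa [List.flatten_cons] using List.Perm.append hlT1 hP3

end Extraction

section Main

variable {G K : Type*} [Group G] [Group K] [Finite G] [Finite K]

/-- The main combinatorial lemma: any sequence over `G` of length at least
`dC K + (dC H - 1) * fC K`, where `H = ker φ`, contains a nonempty product-one
subsequence of length at most `fC H * fC K`. -/
lemma main_assemble (φ : G →* K) {S : List G}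
    (hS : dC K + (dC (↥φ.ker) - 1) * fC K ≤ S.length) :
    ∃ T : List G, T ≠ [] ∧ T.Sublist S ∧ T.length ≤ fC (↥φ.ker) * fC K ∧ IsProdOne T := by
  classical
  obtain ⟨Ts, hTs1, hTs2, hTs3⟩ := extract φ (dC (↥φ.ker) - 1) S hS
  obtain ⟨P, hP1, hP2, hP3⟩ := choose_perms φ Ts hTs2
  -- the list of kernel elements
  set f : {x // x ∈ P} → ↥φ.ker := fun p => ⟨p.1.prod, MonoidHom.mem_ker.mpr (hP2 p.1 p.2).2.2⟩
    with hf
  set hs : List ↥φ.ker := P.attach.map f with hhs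
  have hhslen : hs.length = dC (↥φ.ker) := by
    rw [hhs, List.length_map, List.length_attach, hP1, hTs1]
    have := dC_pos (↥φ.ker)
    omega
  obtain ⟨U, hU1, hU2, hU3, hU4⟩ := (fC_spec (↥φ.ker)).2 hs hhslen
  obtain ⟨A, hA, rfl⟩ := List.sublist_map_iff.mp hU2
  obtain ⟨u, hu1, hu2⟩ := hU4
  obtain ⟨A', hA'1, hA'2⟩ := exists_perm_map f u A hu1
  set Q' : List (List G) := A'.map Subtype.val with hQ'
  set W : List G := Q'.flatten with hW
  -- every element of `A'` is a member of `P`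
  have hmemP : ∀ a ∈ A', a.1 ≠ [] ∧ a.1.length ≤ fC K ∧ φ a.1.prod = 1 := by
    intro a _
    exact hP2 a.1 a.2
  -- W has product 1
  have hWprod : W.prod = 1 := by
    have h1 : Q'.map List.prod = u.map (φ.ker.subtype) := by
      rw [hQ', List.map_map, ← hA'2, List.map_map]
      rfl
    rw [hW, List.prod_flatten, h1, ← map_list_prod, hu2, map_one]
  -- W is nonempty
  have hA'ne : A' ≠ [] := by
    intro hnil
    apply hU1
    have hu0 : u = [] := by rw [← hA'2, hnil]; rfl
    rw [hu0] at hu1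
    exact (List.Perm.nil_eq hu1).symm
  have hWne : W ≠ [] := by
    obtain ⟨a, A'', rfl⟩ := List.exists_cons_of_ne_nil hA'ne
    have ha := (hmemP a List.mem_cons_self).1
    rw [hW, hQ', List.map_cons, List.flatten_cons]
    intro hnil
    exact ha (List.append_eq_nil_iff.mp hnil).1
  -- length bound
  have hWlen : W.length ≤ fC (↥φ.ker) * fC K := by
    rw [hW, List.length_flatten]
    have hbound : ∀ x ∈ Q'.map List.length, x ≤ fC K := by
      intro x hx
      obtain ⟨l, hl, rfl⟩ := List.mem_map.mp hx
      obtain ⟨a, ha, rfl⟩ := List.mem_map.mp (hQ' ▸ hl)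
      exact (hmemP a ha).2.1
    calc (Q'.map List.length).sum ≤ (Q'.map List.length).length * fC K :=
          sum_le_length_mul hbound
      _ = A'.length * fC K := by rw [List.length_map, hQ', List.length_map]
      _ ≤ fC (↥φ.ker) * fC K := by
          apply Nat.mul_le_mul_right
          rw [hA'1.length_eq]
          have : A.length = (A.map f).length := (List.length_map f).symm
          omega
  -- W is (as a multiset) contained in S
  have hWS : (W : Multiset G) ≤ (S : Multiset G) := by
    have hAP : A.map Subtype.val |>.Sublist P := by
      have h0 := hA.map (Subtype.val : {x // x ∈ P} → List G)
      rwa [List.attach_map_subtype_val] at h0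
    have h1 : W.Perm (A.map Subtype.val).flatten := by
      rw [hW, hQ']
      exact (hA'1.map Subtype.val).flatten
    have h2 : (A.map Subtype.val).flatten.Sublist P.flatten := Sublist.flatten' hAP
    have h3 : (P.flatten : Multiset G) = (Ts.flatten : Multiset G) := Multiset.coe_eq_coe.mpr hP3
    calc (W : Multiset G) = ((A.map Subtype.val).flatten : Multiset G) :=
          Multiset.coe_eq_coe.mpr h1
      _ ≤ (P.flatten : Multiset G) := Multiset.coe_le.mpr h2.subperm
      _ = (Ts.flatten : Multiset G) := h3
      _ ≤ (S : Multiset G) := hTs3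
  obtain ⟨W', hW'1, hW'2⟩ := Multiset.coe_le.mp hWS
  refine ⟨W', ?_, hW'2, ?_, ?_⟩
  · intro hnil
    rw [hnil] at hW'1
    exact hWne (List.Perm.nil_eq hW'1).symm
  · rw [hW'1.length_eq]; exact hWlen
  · exact ⟨W, hW'1.symm, hWprod⟩

end Main

/-- For a short exact sequence `1 → H → G → K → 1` of finite groups,
`d(G) ≤ (d(H) - 1) f(K) + d(K)`, and if equality holds then `f(G) ≤ f(H) f(K)`. -/
theorem extension_bound (G K : Type*) [Group G] [Group K] [Finite G] [Finite K]
    (φ : G →* K) (hφ : Function.Surjective φ) :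
    dC G ≤ (dC (↥φ.ker) - 1) * fC K + dC K ∧
      (dC G = (dC (↥φ.ker) - 1) * fC K + dC K → fC G ≤ fC (↥φ.ker) * fC K) := by
  have hbound : ∀ S : List G, S.length = (dC (↥φ.ker) - 1) * fC K + dC K →
      ∃ T : List G, T ≠ [] ∧ T.Sublist S ∧ T.length ≤ fC (↥φ.ker) * fC K ∧ IsProdOne T := by
    intro S hS
    apply main_assemble φ
    omega
  constructor
  · apply Nat.sInf_le
    refine ⟨?_, fun S hS => ?_⟩
    · have := dC_pos K; omega
    · obtain ⟨T, h1, h2, _, h4⟩ := hbound S hS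
      exact ⟨T, h1, h2, h4⟩
  · intro heq
    apply Nat.sInf_le
    refine ⟨?_, fun S hS => ?_⟩
    · have := fC_pos K; have := fC_pos (↥φ.ker)
      exact Nat.mul_pos ‹_› ‹_›
    · exact hbound S (by omega)
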